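/- Let u be twice differentiable on an open interval I ⊆ (0, 1) and satisfy the example equation on I. Then the function H(x) := (1 − x²)·u'(x)²/2 − γ·u(x)²/2 + (δ/(p+1))·u(x)^{p+1} is differentiable on I and H'(x) = −((1+β)x + α/x)·u'(x)² for every x ∈ I. -/

import Mathlib

set_option autoImplicit false

open Real Set

/-- Along a twice differentiable solution of the example equation on an open
interval `I ⊆ (0,1)`, the Lyapunov function
`H(x) = (1-x²)u'(x)²/2 - γu(x)²/2 + (δ/(p+1))u(x)^{p+1}` is differentiable with
`H'(x) = -((1+β)x + α/x) u'(x)²`. -/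
theorem exampleEquation_lyapunov_derivative
    (p : ℕ) (hp : 1 < p) (α β γ δ : ℝ) (hα : 0 < α) (hδ : δ ≠ 0)
    (s t : ℝ) (hI : Ioo s t ⊆ Ioo (0 : ℝ) 1)
    (u : ℝ → ℝ)
    (hdiff : ∀ x ∈ Ioo s t, DifferentiableAt ℝ u x)
    (hdiff2 : ∀ x ∈ Ioo s t, DifferentiableAt ℝ (deriv u) x)
    (heq : ∀ x ∈ Ioo s t,
      (1 - x ^ 2) * deriv (deriv u) x + (α / x + β * x) * deriv u x
        - γ * u x + δ * u x ^ p = 0) :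
    ∀ x ∈ Ioo s t,
      HasDerivAt
        (fun x : ℝ => (1 - x ^ 2) * (deriv u x) ^ 2 / 2 - γ * (u x) ^ 2 / 2
          + δ / ((p : ℝ) + 1) * u x ^ (p + 1))
        (-(((1 + β) * x + α / x) * (deriv u x) ^ 2)) x := by
  intro x hx
  have hx0 : x ≠ 0 := ne_of_gt (hI hx).1
  have hu : HasDerivAt u (deriv u x) x := (hdiff x hx).hasDerivAt
  have hv : HasDerivAt (deriv u) (deriv (deriv u) x) x := (hdiff2 x hx).hasDerivAt
  have hA : HasDerivAt (fun x : ℝ => 1 - x ^ 2) (0 - 2 * x ^ 1 * 1) x :=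
    (hasDerivAt_const x 1).sub ((hasDerivAt_id x).pow 2)
  have h1 := (((hA.mul (hv.pow 2)).div_const 2).sub
      (((hu.pow 2).const_mul γ).div_const 2)).add
      ((hu.pow (p + 1)).const_mul (δ / ((p : ℝ) + 1)))
  refine h1.congr_deriv (Eq.symm ?_)
  have hpne : ((p : ℝ) + 1) ≠ 0 := by positivity
  have he := heq x hx
  simp only [Nat.add_sub_cancel, pow_one, id_eq, Nat.cast_ofNat, Nat.cast_add, Nat.cast_one, Pi.pow_apply]
  have hcancel : δ / ((p : ℝ) + 1) * (((p : ℝ) + 1) * u x ^ p * deriv u x)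
      = δ * u x ^ p * deriv u x := by
    field_simp
  rw [hcancel]
  linear_combination (-(deriv u x)) * he
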